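/- For all integers n ≥ 2 and r ≥ 1, La(n, B, D_r) = C(C(n, ⌊n/2⌋), r): the maximum number of copies of the generalized diamond D_r over all B-free families ℱ ⊆ 2^[n] equals the binomial coefficient C(M, r) with M = C(n, ⌊n/2⌋). -/

import Mathlib

open Classical Finset

noncomputable section

/-- `G` is a copy of the finite poset `α` among the subsets of `[n]`:
there is a bijection `φ` from `α` onto `G` such that `x ≤ y` implies `φ x ⊆ φ y`. -/
def IsCopy (α : Type) [PartialOrder α] [Fintype α] {n : ℕ}
    (G : Finset (Finset (Fin n))) : Prop :=
  ∃ φ : α → Finset (Fin n), Function.Injective φ ∧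
    Finset.image φ Finset.univ = G ∧ ∀ x y : α, x ≤ y → φ x ⊆ φ y

/-- `copyCount α F` is the number of copies of the poset `α` in the family `F`,
copies being counted as subfamilies of `F`. -/
def copyCount (α : Type) [PartialOrder α] [Fintype α] {n : ℕ}
    (F : Finset (Finset (Fin n))) : ℕ :=
  (F.powerset.filter fun G => IsCopy α G).card

/-- `La n P Q`: the maximum number of copies of `Q` in a `P`-free family of subsets of `[n]`. -/
def La (n : ℕ) (P Q : Type) [PartialOrder P] [Fintype P]
    [PartialOrder Q] [Fintype Q] : ℕ :=
  ((Finset.univ : Finset (Finset (Finset (Fin n)))).filter fun F =>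
    copyCount P F = 0).sup (copyCount Q)

/-- `La2 n P₁ P₂ Q`: the maximum number of copies of `Q` in a family of subsets of `[n]`
that is both `P₁`-free and `P₂`-free. -/
def La2 (n : ℕ) (P₁ P₂ Q : Type) [PartialOrder P₁] [Fintype P₁]
    [PartialOrder P₂] [Fintype P₂] [PartialOrder Q] [Fintype Q] : ℕ :=
  ((Finset.univ : Finset (Finset (Finset (Fin n)))).filter fun F =>
    copyCount P₁ F = 0 ∧ copyCount P₂ F = 0).sup (copyCount Q)

/-- the full `k`-th level of `2^[n]`. -/
def level (n k : ℕ) : Finset (Finset (Fin n)) :=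
  Finset.univ.filter fun A => A.card = k

/-- `γ^r_{i,j}(F)`: the number of `r`-element subfamilies of `F` whose intersection has
size `i` and whose union has size `j`. -/
def gammaCount (r n i j : ℕ) (F : Finset (Finset (Fin n))) : ℕ :=
  (F.powerset.filter fun G =>
    G.card = r ∧ (G.inf id).card = i ∧ (G.sup id).card = j).card

/-- `β^r_i(F)`: the number of `r`-element subfamilies of `F` whose intersection has size `i`. -/
def betaCount (r n i : ℕ) (F : Finset (Finset (Fin n))) : ℕ :=
  (F.powerset.filter fun G => G.card = r ∧ (G.inf id).card = i).card

/-- the complete multi-level poset `K_{r 0, …, r (s-1)}`: level `i` has `r i` elements,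
and every element of level `i` is below every element of level `j` whenever `i < j`. -/
def KP {s : ℕ} (r : Fin s → ℕ) : Type := Σ i, Fin (r i)

namespace KP

variable {s : ℕ} {r : Fin s → ℕ}

def le (x y : KP r) : Prop := x = y ∨ x.1 < y.1

instance : PartialOrder (KP r) where
  le := KP.le
  le_refl x := Or.inl rfl
  le_trans x y z hxy hyz := by
    rcases hxy with rfl | h
    · exact hyz
    · rcases hyz with rfl | h'
      · exact Or.inr h
      · exact Or.inr (h.trans h')
  le_antisymm x y hxy hyx := by
    rcases hxy with rfl | h
    · rfl
    · rcases hyx with rfl | h'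
      · rfl
      · exact absurd (h.trans h') (lt_irrefl _)

instance : Fintype (KP r) := inferInstanceAs (Fintype (Σ i, Fin (r i)))

end KP

/-- the chain (totally ordered poset) with `k` elements. -/
abbrev PChain (k : ℕ) := Fin k

/-- `∨_r = K_{1,r}` -/
abbrev VeePoset (r : ℕ) := KP ![1, r]

/-- `∧_r = K_{r,1}` -/
abbrev WedgePoset (r : ℕ) := KP ![r, 1]

/-- the generalized diamond `D_r = K_{1,r,1}` -/
abbrev DiamondPoset (r : ℕ) := KP ![1, r, 1]

/-- the butterfly poset `B = K_{2,2}` -/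
abbrev Butterfly := KP ![2, 2]

/-- the height `l(Q)` of a finite poset: the number of elements of a longest chain. -/
def height (Q : Type) [PartialOrder Q] [Fintype Q] : ℕ :=
  ((Finset.univ : Finset (Finset Q)).filter fun C : Finset Q =>
    IsChain (· ≤ ·) (↑C : Set Q)).sup Finset.card


/-- `Q₁ ⊗_r Q₂`: disjoint copies of `Q₁` and `Q₂` with an `r`-element antichain in between;
everything in `Q₁` is below the middle elements and below everything in `Q₂`,
and the middle elements are below everything in `Q₂`. -/
inductive Otimes (Q₁ Q₂ : Type) (r : ℕ) : Type
  | bot : Q₁ → Otimes Q₁ Q₂ r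
  | mid : Fin r → Otimes Q₁ Q₂ r
  | top : Q₂ → Otimes Q₁ Q₂ r

namespace Otimes

variable {Q₁ Q₂ : Type} {r : ℕ}

def le [PartialOrder Q₁] [PartialOrder Q₂] : Otimes Q₁ Q₂ r → Otimes Q₁ Q₂ r → Prop
  | bot a, bot b => a ≤ b
  | bot _, mid _ => True
  | bot _, top _ => True
  | mid i, mid j => i = j
  | mid _, top _ => True
  | top a, top b => a ≤ b
  | _, _ => False

instance [PartialOrder Q₁] [PartialOrder Q₂] : PartialOrder (Otimes Q₁ Q₂ r) where
  le := Otimes.le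
  le_refl x := by cases x <;> simp [Otimes.le]
  le_trans x y z hxy hyz := by
    cases x <;> cases y <;> cases z <;> simp_all [Otimes.le] <;>
      first
        | exact le_trans hxy hyz
        | trivial
  le_antisymm x y hxy hyx := by
    cases x <;> cases y <;> simp_all [Otimes.le] <;>
      first
        | exact le_antisymm hxy hyx
        | rfl

instance [Fintype Q₁] [Fintype Q₂] : Fintype (Otimes Q₁ Q₂ r) :=
  Fintype.ofEquiv (Q₁ ⊕ Fin r ⊕ Q₂)
    { toFun := fun x => match x with
        | Sum.inl a => bot a
        | Sum.inr (Sum.inl i) => mid i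
        | Sum.inr (Sum.inr b) => top b
      invFun := fun x => match x with
        | bot a => Sum.inl a
        | mid i => Sum.inr (Sum.inl i)
        | top b => Sum.inr (Sum.inr b)
      left_inv := fun x => by rcases x with a | (i | b) <;> rfl
      right_inv := fun x => by cases x <;> rfl }

end Otimes

/-- `Q ⊕ r`: the poset obtained from `Q` by adding an antichain of `r` new elements,
each above every element of `Q`. -/
inductive Oplus (Q : Type) (r : ℕ) : Type
  | base : Q → Oplus Q r
  | new : Fin r → Oplus Q r

namespace Oplus

variable {Q : Type} {r : ℕ}

def le [PartialOrder Q] : Oplus Q r → Oplus Q r → Prop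
  | base a, base b => a ≤ b
  | base _, new _ => True
  | new i, new j => i = j
  | new _, base _ => False

instance [PartialOrder Q] : PartialOrder (Oplus Q r) where
  le := Oplus.le
  le_refl x := by cases x <;> simp [Oplus.le]
  le_trans x y z hxy hyz := by
    cases x <;> cases y <;> cases z <;> simp_all [Oplus.le] <;>
      first
        | exact le_trans hxy hyz
        | trivial
  le_antisymm x y hxy hyx := by
    cases x <;> cases y <;> simp_all [Oplus.le] <;>
      first
        | exact le_antisymm hxy hyx
        | rfl

instance [Fintype Q] : Fintype (Oplus Q r) :=
  Fintype.ofEquiv (Q ⊕ Fin r)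
    { toFun := fun x => match x with
        | Sum.inl a => base a
        | Sum.inr i => new i
      invFun := fun x => match x with
        | base a => Sum.inl a
        | new i => Sum.inr i
      left_inv := fun x => by rcases x with a | i <;> rfl
      right_inv := fun x => by cases x <;> rfl }

end Oplus

/-- the poset `N`: four elements `a, b, c, d` with `a ≤ c`, `b ≤ c`, `b ≤ d`
and no other nontrivial relations. -/
inductive NPoset : Type
  | a | b | c | d
  deriving DecidableEq

instance instFintypeNPoset : Fintype NPoset :=
  ⟨{NPoset.a, NPoset.b, NPoset.c, NPoset.d}, fun x => by cases x <;> simp⟩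

namespace NPoset

def le : NPoset → NPoset → Prop := fun x y =>
  x = y ∨ (x = a ∧ y = c) ∨ (x = b ∧ y = c) ∨ (x = b ∧ y = d)

instance : DecidableRel le := fun x y => by unfold le; infer_instance

theorem le_refl' : ∀ x : NPoset, le x x := by decide
theorem le_trans' : ∀ x y z : NPoset, le x y → le y z → le x z := by decide
theorem le_antisymm' : ∀ x y : NPoset, le x y → le y x → x = y := by decide

instance : PartialOrder NPoset :=
  { le := le, le_refl := le_refl', le_trans := le_trans', le_antisymm := le_antisymm' }

end NPoset

/-- the poset `B⁺`: five elements with `a < c`, `a < e`, `b < c`, `b < d`, `d < e`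
(and the relation `b < e` forced by transitivity). -/
inductive BPlusPoset : Type
  | a | b | c | d | e
  deriving DecidableEq

instance instFintypeBPlusPoset : Fintype BPlusPoset :=
  ⟨{BPlusPoset.a, BPlusPoset.b, BPlusPoset.c, BPlusPoset.d, BPlusPoset.e}, fun x => by cases x <;> simp⟩

namespace BPlusPoset

def le : BPlusPoset → BPlusPoset → Prop := fun x y =>
  x = y ∨ (x = a ∧ y = c) ∨ (x = a ∧ y = e) ∨ (x = b ∧ y = c) ∨ (x = b ∧ y = d) ∨
    (x = b ∧ y = e) ∨ (x = d ∧ y = e)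

instance : DecidableRel le := fun x y => by unfold le; infer_instance

theorem le_refl' : ∀ x : BPlusPoset, le x x := by decide
theorem le_trans' : ∀ x y z : BPlusPoset, le x y → le y z → le x z := by decide
theorem le_antisymm' : ∀ x y : BPlusPoset, le x y → le y x → x = y := by decide

instance : PartialOrder BPlusPoset :=
  { le := le, le_refl := le_refl', le_trans := le_trans', le_antisymm := le_antisymm' }

end BPlusPoset

/-- the poset `B⁺⁺`: five elements with `a, b < c, d` and `d < e`
(hence also `a < e` and `b < e`). -/
inductive BPlusPlusPoset : Type
  | a | b | c | d | e
  deriving DecidableEq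

instance instFintypeBPlusPlusPoset : Fintype BPlusPlusPoset :=
  ⟨{BPlusPlusPoset.a, BPlusPlusPoset.b, BPlusPlusPoset.c, BPlusPlusPoset.d, BPlusPlusPoset.e}, fun x => by cases x <;> simp⟩

namespace BPlusPlusPoset

def le : BPlusPlusPoset → BPlusPlusPoset → Prop := fun x y =>
  x = y ∨ (x = a ∧ y = c) ∨ (x = a ∧ y = d) ∨ (x = a ∧ y = e) ∨ (x = b ∧ y = c) ∨
    (x = b ∧ y = d) ∨ (x = b ∧ y = e) ∨ (x = d ∧ y = e)

instance : DecidableRel le := fun x y => by unfold le; infer_instance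

theorem le_refl' : ∀ x : BPlusPlusPoset, le x x := by decide
theorem le_trans' : ∀ x y z : BPlusPlusPoset, le x y → le y z → le x z := by decide
theorem le_antisymm' : ∀ x y : BPlusPlusPoset, le x y → le y x → x = y := by decide

instance : PartialOrder BPlusPlusPoset :=
  { le := le, le_refl := le_refl', le_trans := le_trans', le_antisymm := le_antisymm' }

end BPlusPlusPoset

/-- the binary entropy function `h(x) = -x log₂ x - (1-x) log₂ (1-x)`. -/
def binEnt (x : ℝ) : ℝ := -x * Real.logb 2 x - (1 - x) * Real.logb 2 (1 - x)



def HasQuad {n : ℕ} (F : Finset (Finset (Fin n))) : Prop :=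
  ∃ X ∈ F, ∃ Y ∈ F, ∃ Z ∈ F, ∃ W ∈ F,
    X ≠ Y ∧ X ≠ Z ∧ X ≠ W ∧ Y ≠ Z ∧ Y ≠ W ∧ Z ≠ W ∧
    X ⊆ Z ∧ X ⊆ W ∧ Y ⊆ Z ∧ Y ⊆ W

lemma kp_ne {s : ℕ} {r : Fin s → ℕ} {i j : Fin s} {a : Fin (r i)} {b : Fin (r j)}
    (h : ¬(i = j ∧ (a : ℕ) = (b : ℕ))) : (⟨i, a⟩ : KP r) ≠ ⟨j, b⟩ := by
  intro e
  obtain ⟨h1, h2⟩ := Sigma.mk.inj_iff.mp e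
  exact h ⟨h1, by subst h1; exact congrArg Fin.val (eq_of_heq h2)⟩

lemma kp_le {s : ℕ} {r : Fin s → ℕ} (x y : KP r) (h : x.1 < y.1) : x ≤ y :=
  show KP.le x y from Or.inr h

lemma hasQuad_of_copy {n : ℕ} {F : Finset (Finset (Fin n))}
    (h : copyCount Butterfly F ≠ 0) : HasQuad F := by
  rw [copyCount] at h
  obtain ⟨G, hG⟩ := Finset.card_ne_zero.mp h
  rw [Finset.mem_filter, Finset.mem_powerset] at hG
  obtain ⟨hGF, φ, hinj, himg, hmono⟩ := hG
  have hmem : ∀ x : Butterfly, φ x ∈ F := by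
    intro x
    apply hGF
    rw [← himg]
    exact Finset.mem_image_of_mem φ (Finset.mem_univ x)
  refine ⟨φ ⟨0,⟨0,by decide⟩⟩, hmem _, φ ⟨0,⟨1,by decide⟩⟩, hmem _, φ ⟨1,⟨0,by decide⟩⟩, hmem _, φ ⟨1,⟨1,by decide⟩⟩, hmem _,
    ?_, ?_, ?_, ?_, ?_, ?_, ?_, ?_, ?_, ?_⟩
  all_goals try (exact fun e => absurd (hinj e) (kp_ne (by simp)))
  · exact hmono _ _ (kp_le _ _ (by decide))
  · exact hmono _ _ (kp_le _ _ (by decide))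
  · exact hmono _ _ (kp_le _ _ (by decide))
  · exact hmono _ _ (kp_le _ _ (by decide))

def b00 : Butterfly := ⟨⟨0, by norm_num⟩, ⟨0, by norm_num⟩⟩
def b01 : Butterfly := ⟨⟨0, by norm_num⟩, ⟨1, by norm_num⟩⟩
def b10 : Butterfly := ⟨⟨1, by norm_num⟩, ⟨0, by norm_num⟩⟩
def b11 : Butterfly := ⟨⟨1, by norm_num⟩, ⟨1, by norm_num⟩⟩

lemma butterfly_elems (x : Butterfly) : x = b00 ∨ x = b01 ∨ x = b10 ∨ x = b11 := by
  rcases x with ⟨⟨i, hi⟩, ⟨u, hu⟩⟩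
  interval_cases i
  · have hu2 : u < 2 := hu
    interval_cases u
    · exact Or.inl rfl
    · exact Or.inr (Or.inl rfl)
  · have hu2 : u < 2 := hu
    interval_cases u
    · exact Or.inr (Or.inr (Or.inl rfl))
    · exact Or.inr (Or.inr (Or.inr rfl))

def quadPhi {n : ℕ} (X Y Z W : Finset (Fin n)) : Butterfly → Finset (Fin n) :=
  fun x => if (x.1 : ℕ) = 0 then (if (x.2 : ℕ) = 0 then X else Y)
           else (if (x.2 : ℕ) = 0 then Z else W)

lemma quadPhi_b00 {n : ℕ} (X Y Z W : Finset (Fin n)) : quadPhi X Y Z W b00 = X := rfl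
lemma quadPhi_b01 {n : ℕ} (X Y Z W : Finset (Fin n)) : quadPhi X Y Z W b01 = Y := rfl
lemma quadPhi_b10 {n : ℕ} (X Y Z W : Finset (Fin n)) : quadPhi X Y Z W b10 = Z := rfl
lemma quadPhi_b11 {n : ℕ} (X Y Z W : Finset (Fin n)) : quadPhi X Y Z W b11 = W := rfl

lemma copy_of_quad {n : ℕ} {F : Finset (Finset (Fin n))} (h : HasQuad F) :
    copyCount Butterfly F ≠ 0 := by
  obtain ⟨X, hX, Y, hY, Z, hZ, W, hW, hXY, hXZ, hXW, hYZ, hYW, hZW,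
    sXZ, sXW, sYZ, sYW⟩ := h
  rw [copyCount]
  apply Finset.card_ne_zero.mpr
  refine ⟨{X, Y, Z, W}, Finset.mem_filter.mpr ⟨Finset.mem_powerset.mpr ?_, ?_⟩⟩
  · intro S hS
    simp only [Finset.mem_insert, Finset.mem_singleton] at hS
    rcases hS with rfl | rfl | rfl | rfl <;> assumption
  · refine ⟨quadPhi X Y Z W, ?_, ?_, ?_⟩
    · intro a b hab
      rcases butterfly_elems a with rfl | rfl | rfl | rfl <;>
        rcases butterfly_elems b with rfl | rfl | rfl | rfl <;>
        simp_all [quadPhi_b00, quadPhi_b01, quadPhi_b10, quadPhi_b11] <;> rfl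
    · ext S
      simp only [Finset.mem_image, Finset.mem_insert, Finset.mem_singleton]
      constructor
      · rintro ⟨x, -, rfl⟩
        rcases butterfly_elems x with rfl | rfl | rfl | rfl <;>
          simp [quadPhi_b00, quadPhi_b01, quadPhi_b10, quadPhi_b11]
      · rintro (rfl | rfl | rfl | rfl)
        · exact ⟨b00, Finset.mem_univ _, rfl⟩
        · exact ⟨b01, Finset.mem_univ _, rfl⟩
        · exact ⟨b10, Finset.mem_univ _, rfl⟩
        · exact ⟨b11, Finset.mem_univ _, rfl⟩
    · intro x y hxy
      rcases hxy with rfl | hlt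
      · exact subset_rfl
      · rcases butterfly_elems x with rfl | rfl | rfl | rfl <;>
          rcases butterfly_elems y with rfl | rfl | rfl | rfl <;>
          first
            | exact absurd hlt (by decide)
            | simpa [quadPhi_b00, quadPhi_b01, quadPhi_b10, quadPhi_b11] using ‹_›

lemma diamond_card (r : ℕ) : Fintype.card (DiamondPoset r) = r + 2 := by
  show Fintype.card (Σ i, Fin (![1, r, 1] i)) = r + 2
  rw [Fintype.card_sigma, Fin.sum_univ_three]
  simp only [Fintype.card_fin]
  simp
  omega

-- a generic element of index 0 / 2
lemma diamond_elem0 {r : ℕ} (x : DiamondPoset r) (hx : (x.1 : ℕ) = 0) :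
    x = ⟨⟨0, by norm_num⟩, ⟨0, by norm_num⟩⟩ := by
  rcases x with ⟨⟨i, hi⟩, ⟨u, hu⟩⟩
  simp only at hx
  subst hx
  have hu1 : u < 1 := hu
  interval_cases u
  rfl

lemma diamond_elem2 {r : ℕ} (x : DiamondPoset r) (hx : (x.1 : ℕ) = 2) :
    x = ⟨⟨2, by norm_num⟩, ⟨0, by norm_num⟩⟩ := by
  rcases x with ⟨⟨i, hi⟩, ⟨u, hu⟩⟩
  simp only at hx
  subst hx
  have hu1 : u < 1 := hu
  interval_cases u
  rfl

lemma diamond_x2_lt {r : ℕ} (x : DiamondPoset r) (h1 : (x.1 : ℕ) = 1) : (x.2 : ℕ) < r := by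
  have hx2 := x.2.isLt
  have hfst : x.1 = ⟨1, by norm_num⟩ := Fin.ext h1
  have hr : ![1, r, 1] x.1 = r := by rw [hfst]; simp
  omega

def diamondPhi {n r : ℕ} (A C : Finset (Fin n)) (g : Fin r → Finset (Fin n)) :
    DiamondPoset r → Finset (Fin n) :=
  fun x => if h0 : (x.1 : ℕ) = 0 then A else if h2 : (x.1 : ℕ) = 2 then C
    else g ⟨(x.2 : ℕ), diamond_x2_lt x (by have := x.1.isLt; omega)⟩

lemma diamondPhi_eval0 {n r : ℕ} {A C : Finset (Fin n)} {g : Fin r → Finset (Fin n)}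
    (x : DiamondPoset r) (h : (x.1 : ℕ) = 0) : diamondPhi A C g x = A := dif_pos h

lemma diamondPhi_eval2 {n r : ℕ} {A C : Finset (Fin n)} {g : Fin r → Finset (Fin n)}
    (x : DiamondPoset r) (h : (x.1 : ℕ) = 2) : diamondPhi A C g x = C := by
  unfold diamondPhi
  rw [dif_neg (by omega), dif_pos h]

lemma diamondPhi_eval1 {n r : ℕ} {A C : Finset (Fin n)} {g : Fin r → Finset (Fin n)}
    (x : DiamondPoset r) (h : (x.1 : ℕ) = 1) (h' : (x.2 : ℕ) < r) :
    diamondPhi A C g x = g ⟨(x.2 : ℕ), h'⟩ := by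
  unfold diamondPhi
  rw [dif_neg (by omega), dif_neg (by omega)]

lemma isCopy_diamond_iff {n r : ℕ} (G : Finset (Finset (Fin n))) :
    IsCopy (DiamondPoset r) G ↔
      G.card = r + 2 ∧ ∃ A ∈ G, ∃ C ∈ G, A ≠ C ∧ ∀ X ∈ G, A ⊆ X ∧ X ⊆ C := by
  constructor
  · rintro ⟨φ, hinj, himg, hmono⟩
    have hcard : G.card = r + 2 := by
      rw [← himg, Finset.card_image_of_injective _ hinj, Finset.card_univ, diamond_card]
    set a0 : DiamondPoset r := ⟨⟨0, by norm_num⟩, ⟨0, by norm_num⟩⟩ with ha0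
    set c0 : DiamondPoset r := ⟨⟨2, by norm_num⟩, ⟨0, by norm_num⟩⟩ with hc0
    have hmemG : ∀ x : DiamondPoset r, φ x ∈ G := fun x => by
      rw [← himg]; exact Finset.mem_image_of_mem φ (Finset.mem_univ x)
    refine ⟨hcard, φ a0, hmemG _, φ c0, hmemG _, ?_, ?_⟩
    · intro e
      have := hinj e
      have := congrArg (fun y : DiamondPoset r => (y.1 : ℕ)) this
      simp [ha0, hc0] at this
    · intro X hX
      rw [← himg] at hX
      obtain ⟨x, -, rfl⟩ := Finset.mem_image.mp hX
      constructor
      · refine hmono _ _ ?_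
        by_cases h0 : (x.1 : ℕ) = 0
        · exact le_of_eq (diamond_elem0 x h0).symm
        · exact Or.inr (by simp [ha0]; omega)
      · refine hmono _ _ ?_
        by_cases h2 : (x.1 : ℕ) = 2
        · exact le_of_eq (diamond_elem2 x h2)
        · refine Or.inr ?_
          have := x.1.isLt
          simp [hc0]
          omega
  · rintro ⟨hcard, A, hA, C, hC, hAC, hbound⟩
    classical
    set mids := (G.erase A).erase C with hmids
    have hCA : C ∈ G.erase A := Finset.mem_erase.mpr ⟨fun h => hAC h.symm, hC⟩
    have hmcard : mids.card = r := by
      rw [hmids, Finset.card_erase_of_mem hCA, Finset.card_erase_of_mem hA, hcard]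
      omega
    have hAm : A ∉ mids := fun h => (Finset.mem_erase.mp (Finset.mem_erase.mp h).2).1 rfl
    have hCm : C ∉ mids := fun h => (Finset.mem_erase.mp h).1 rfl
    have hmsub : mids ⊆ G := fun X hX => Finset.mem_of_mem_erase (Finset.mem_of_mem_erase hX)
    set e := Finset.equivFinOfCardEq hmcard with he
    set g : Fin r → Finset (Fin n) := fun j => ((e.symm j : mids) : Finset (Fin n)) with hg
    have hginj : Function.Injective g := fun a b hab =>
      e.symm.injective (Subtype.ext hab)
    have hgm : ∀ j, g j ∈ mids := fun j => (e.symm j).2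
    have hφmem : ∀ x, diamondPhi A C g x ∈ G := by
      intro x
      by_cases h0 : (x.1 : ℕ) = 0
      · rw [diamondPhi_eval0 x h0]; exact hA
      by_cases h2 : (x.1 : ℕ) = 2
      · rw [diamondPhi_eval2 x h2]; exact hC
      have h1 : (x.1 : ℕ) = 1 := by have := x.1.isLt; omega
      rw [diamondPhi_eval1 x h1 (diamond_x2_lt x h1)]
      exact hmsub (hgm _)
    refine ⟨diamondPhi A C g, ?_, ?_, ?_⟩
    · -- injectivity
      intro x y hxy
      have hx3 := x.1.isLt
      have hy3 := y.1.isLt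
      by_cases hx0 : (x.1 : ℕ) = 0 <;> by_cases hy0 : (y.1 : ℕ) = 0
      · rw [diamond_elem0 x hx0, diamond_elem0 y hy0]
      · exfalso
        rw [diamondPhi_eval0 x hx0] at hxy
        by_cases hy2 : (y.1 : ℕ) = 2
        · rw [diamondPhi_eval2 y hy2] at hxy; exact hAC hxy
        · have hy1 : (y.1 : ℕ) = 1 := by omega
          rw [diamondPhi_eval1 y hy1 (diamond_x2_lt y hy1)] at hxy
          exact hAm (hxy ▸ hgm _)
      · exfalso
        rw [diamondPhi_eval0 y hy0] at hxy
        by_cases hx2 : (x.1 : ℕ) = 2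
        · rw [diamondPhi_eval2 x hx2] at hxy; exact hAC hxy.symm
        · have hx1 : (x.1 : ℕ) = 1 := by omega
          rw [diamondPhi_eval1 x hx1 (diamond_x2_lt x hx1)] at hxy
          exact hAm (hxy.symm ▸ hgm _)
      · by_cases hx2 : (x.1 : ℕ) = 2 <;> by_cases hy2 : (y.1 : ℕ) = 2
        · rw [diamond_elem2 x hx2, diamond_elem2 y hy2]
        · exfalso
          have hy1 : (y.1 : ℕ) = 1 := by omega
          rw [diamondPhi_eval2 x hx2, diamondPhi_eval1 y hy1 (diamond_x2_lt y hy1)] at hxy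
          exact hCm (hxy ▸ hgm _)
        · exfalso
          have hx1 : (x.1 : ℕ) = 1 := by omega
          rw [diamondPhi_eval2 y hy2, diamondPhi_eval1 x hx1 (diamond_x2_lt x hx1)] at hxy
          exact hCm (hxy.symm ▸ hgm _)
        · have hx1 : (x.1 : ℕ) = 1 := by omega
          have hy1 : (y.1 : ℕ) = 1 := by omega
          rw [diamondPhi_eval1 x hx1 (diamond_x2_lt x hx1),
            diamondPhi_eval1 y hy1 (diamond_x2_lt y hy1)] at hxy
          have hval : (x.2 : ℕ) = (y.2 : ℕ) := congrArg Fin.val (hginj hxy)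
          refine Sigma.ext (Fin.ext (hx1.trans hy1.symm)) ?_
          exact (Fin.heq_ext_iff
            (by rw [show x.1 = y.1 from Fin.ext (hx1.trans hy1.symm)])).mpr hval
    · -- image
      apply Finset.Subset.antisymm
      · intro S hS
        obtain ⟨x, -, rfl⟩ := Finset.mem_image.mp hS
        exact hφmem x
      · intro X hX
        rw [Finset.mem_image]
        by_cases hXA : X = A
        · exact ⟨⟨⟨0, by norm_num⟩, ⟨0, by norm_num⟩⟩, Finset.mem_univ _,
            (diamondPhi_eval0 _ rfl).trans hXA.symm⟩
        by_cases hXC : X = C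
        · exact ⟨⟨⟨2, by norm_num⟩, ⟨0, by norm_num⟩⟩, Finset.mem_univ _,
            (diamondPhi_eval2 _ rfl).trans hXC.symm⟩
        · have hXm : X ∈ mids := Finset.mem_erase.mpr ⟨hXC, Finset.mem_erase.mpr ⟨hXA, hX⟩⟩
          set j := e ⟨X, hXm⟩ with hj
          refine ⟨⟨⟨1, by norm_num⟩, ⟨(j : ℕ), by simpa using j.isLt⟩⟩, Finset.mem_univ _, ?_⟩
          refine (diamondPhi_eval1 _ rfl (diamond_x2_lt _ rfl)).trans ?_
          show g ⟨(j : ℕ), _⟩ = X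
          have : (⟨(j : ℕ), j.isLt⟩ : Fin r) = j := Fin.eta j j.isLt
          rw [this, hg, hj]
          simp
    · -- monotone
      intro x y hxy
      rcases hxy with rfl | hlt
      · exact subset_rfl
      · have hlt' : (x.1 : ℕ) < (y.1 : ℕ) := hlt
        have hy3 := y.1.isLt
        by_cases hx0 : (x.1 : ℕ) = 0
        · rw [diamondPhi_eval0 x hx0]
          exact (hbound _ (hφmem y)).1
        · have hy2 : (y.1 : ℕ) = 2 := by omega
          rw [diamondPhi_eval2 y hy2]
          exact (hbound _ (hφmem x)).2



lemma mids_char {n : ℕ} {G : Finset (Finset (Fin n))} {A C : Finset (Fin n)}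
    (hA : A ∈ G) (hC : C ∈ G) (hbound : ∀ X ∈ G, A ⊆ X ∧ X ⊆ C) (X : Finset (Fin n)) :
    X ∈ G.filter (fun X => (∃ A' ∈ G, A' ⊂ X) ∧ (∃ C' ∈ G, X ⊂ C')) ↔
      X ∈ G ∧ X ≠ A ∧ X ≠ C := by
  rw [Finset.mem_filter]
  constructor
  · rintro ⟨hXG, ⟨A', hA'G, hA'X⟩, ⟨C', hC'G, hXC'⟩⟩
    refine ⟨hXG, ?_, ?_⟩
    · rintro rfl
      exact absurd (lt_of_lt_of_le hA'X (hbound A' hA'G).1) (lt_irrefl _)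
    · rintro rfl
      exact absurd (lt_of_le_of_lt (hbound C' hC'G).2 hXC') (lt_irrefl _)
  · rintro ⟨hXG, hXA, hXC⟩
    exact ⟨hXG, ⟨A, hA, lt_of_le_of_ne (hbound X hXG).1 (Ne.symm hXA)⟩,
      ⟨C, hC, lt_of_le_of_ne (hbound X hXG).2 hXC⟩⟩

lemma upper_bound {n r : ℕ} (hr : 1 ≤ r) {F : Finset (Finset (Fin n))}
    (hB : ¬ HasQuad F) :
    copyCount (DiamondPoset r) F ≤ (n.choose (n / 2)).choose r := by
  classical
  set Mid := F.filter (fun X => (∃ A ∈ F, A ⊂ X) ∧ (∃ C ∈ F, X ⊂ C)) with hMid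
  have hanti : IsAntichain (· ⊆ ·) (Mid : Set (Finset (Fin n))) := by
    intro X hX Y hY hne hsub
    rw [Finset.mem_coe, hMid, Finset.mem_filter] at hX hY
    obtain ⟨hXF, ⟨A, hAF, hAX⟩, -⟩ := hX
    obtain ⟨hYF, -, C, hCF, hYC⟩ := hY
    have hXY : X ⊂ Y := lt_of_le_of_ne hsub hne
    exact hB ⟨A, hAF, X, hXF, Y, hYF, C, hCF, hAX.ne, (hAX.trans hXY).ne,
      (hAX.trans (hXY.trans hYC)).ne, hXY.ne, (hXY.trans hYC).ne, hYC.ne,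
      (hAX.trans hXY).subset, (hAX.trans (hXY.trans hYC)).subset,
      hXY.subset, (hXY.trans hYC).subset⟩
  have hMidcard : Mid.card ≤ n.choose (n / 2) := by
    have := IsAntichain.sperner hanti
    simpa using this
  rw [copyCount]
  have key : (F.powerset.filter fun G => IsCopy (DiamondPoset r) G).card ≤
      (Mid.powersetCard r).card := by
    apply Finset.card_le_card_of_injOn
      (fun G => G.filter (fun X => (∃ A' ∈ G, A' ⊂ X) ∧ (∃ C' ∈ G, X ⊂ C')))
    · -- maps to
      intro G hG
      simp only [Finset.mem_coe] at hG ⊢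
      rw [Finset.mem_filter, Finset.mem_powerset] at hG
      obtain ⟨hGF, hcopy⟩ := hG
      obtain ⟨hcard, A, hA, C, hC, hAC, hbound⟩ := (isCopy_diamond_iff G).mp hcopy
      rw [Finset.mem_powersetCard]
      constructor
      · intro X hX
        rw [mids_char hA hC hbound] at hX
        obtain ⟨hXG, hXA, hXC⟩ := hX
        rw [hMid, Finset.mem_filter]
        exact ⟨hGF hXG, ⟨A, hGF hA, lt_of_le_of_ne (hbound X hXG).1 (Ne.symm hXA)⟩,
          ⟨C, hGF hC, lt_of_le_of_ne (hbound X hXG).2 hXC⟩⟩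
      · have heq : G.filter (fun X => (∃ A' ∈ G, A' ⊂ X) ∧ (∃ C' ∈ G, X ⊂ C')) =
            (G.erase A).erase C := by
          ext X
          rw [mids_char hA hC hbound, Finset.mem_erase, Finset.mem_erase]
          tauto
        rw [heq, Finset.card_erase_of_mem
          (Finset.mem_erase.mpr ⟨fun h => hAC h.symm, hC⟩),
          Finset.card_erase_of_mem hA, hcard]
        omega
    · -- injective
      intro G₁ hG₁ G₂ hG₂ hf
      simp only [Finset.coe_filter, Set.mem_setOf_eq] at hG₁ hG₂
      obtain ⟨hG₁p, hcopy₁⟩ := hG₁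
      obtain ⟨hG₂p, hcopy₂⟩ := hG₂
      rw [Finset.mem_powerset] at hG₁p hG₂p
      obtain ⟨hcard₁, A₁, hA₁, C₁, hC₁, hAC₁, hbound₁⟩ := (isCopy_diamond_iff G₁).mp hcopy₁
      obtain ⟨hcard₂, A₂, hA₂, C₂, hC₂, hAC₂, hbound₂⟩ := (isCopy_diamond_iff G₂).mp hcopy₂
      have hS1 : (G₁.filter (fun X => (∃ A' ∈ G₁, A' ⊂ X) ∧ (∃ C' ∈ G₁, X ⊂ C'))).Nonempty := by
        apply Finset.card_pos.mp
        have heq : G₁.filter (fun X => (∃ A' ∈ G₁, A' ⊂ X) ∧ (∃ C' ∈ G₁, X ⊂ C')) =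
            (G₁.erase A₁).erase C₁ := by
          ext X
          rw [mids_char hA₁ hC₁ hbound₁, Finset.mem_erase, Finset.mem_erase]
          tauto
        rw [heq, Finset.card_erase_of_mem
          (Finset.mem_erase.mpr ⟨fun h => hAC₁ h.symm, hC₁⟩),
          Finset.card_erase_of_mem hA₁, hcard₁]
        omega
      obtain ⟨X, hX⟩ := hS1
      have hf' : G₁.filter (fun X => (∃ A' ∈ G₁, A' ⊂ X) ∧ (∃ C' ∈ G₁, X ⊂ C')) =
          G₂.filter (fun X => (∃ A' ∈ G₂, A' ⊂ X) ∧ (∃ C' ∈ G₂, X ⊂ C')) := hf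
      have hX₂ := hf' ▸ hX
      rw [mids_char hA₁ hC₁ hbound₁] at hX
      rw [mids_char hA₂ hC₂ hbound₂] at hX₂
      obtain ⟨hXG₁, hXA₁, hXC₁⟩ := hX
      obtain ⟨hXG₂, hXA₂, hXC₂⟩ := hX₂
      have sA₁ : A₁ ⊂ X := lt_of_le_of_ne (hbound₁ X hXG₁).1 (Ne.symm hXA₁)
      have sC₁ : X ⊂ C₁ := lt_of_le_of_ne (hbound₁ X hXG₁).2 hXC₁
      have sA₂ : A₂ ⊂ X := lt_of_le_of_ne (hbound₂ X hXG₂).1 (Ne.symm hXA₂)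
      have sC₂ : X ⊂ C₂ := lt_of_le_of_ne (hbound₂ X hXG₂).2 hXC₂
      have hXF : X ∈ F := hG₁p hXG₁
      have hAeq : A₁ = A₂ := by
        by_contra hAne
        exact hB ⟨A₁, hG₁p hA₁, A₂, hG₂p hA₂, X, hXF, C₁, hG₁p hC₁, hAne,
          sA₁.ne, (sA₁.trans sC₁).ne, sA₂.ne, (sA₂.trans sC₁).ne, sC₁.ne,
          sA₁.subset, (sA₁.trans sC₁).subset, sA₂.subset, (sA₂.trans sC₁).subset⟩
      have hCeq : C₁ = C₂ := by
        by_contra hCne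
        exact hB ⟨A₁, hG₁p hA₁, X, hXF, C₁, hG₁p hC₁, C₂, hG₂p hC₂,
          sA₁.ne, (sA₁.trans sC₁).ne, (sA₁.trans sC₂).ne, sC₁.ne, sC₂.ne, hCne,
          (sA₁.trans sC₁).subset, (sA₁.trans sC₂).subset, sC₁.subset, sC₂.subset⟩
      have recover : ∀ (G : Finset (Finset (Fin n))) (A C : Finset (Fin n)),
          A ∈ G → C ∈ G → A ≠ C → (∀ Y ∈ G, A ⊆ Y ∧ Y ⊆ C) →
          G = insert A (insert C
            (G.filter (fun Y => (∃ A' ∈ G, A' ⊂ Y) ∧ (∃ C' ∈ G, Y ⊂ C')))) := by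
        intro G A C hA hC hAC hbound
        have heq : G.filter (fun Y => (∃ A' ∈ G, A' ⊂ Y) ∧ (∃ C' ∈ G, Y ⊂ C')) =
            (G.erase A).erase C := by
          ext Y
          rw [mids_char hA hC hbound, Finset.mem_erase, Finset.mem_erase]
          tauto
        rw [heq, Finset.insert_erase (Finset.mem_erase.mpr ⟨fun h => hAC h.symm, hC⟩),
          Finset.insert_erase hA]
      calc G₁ = insert A₁ (insert C₁ _) := recover G₁ A₁ C₁ hA₁ hC₁ hAC₁ hbound₁
        _ = insert A₂ (insert C₂ _) := by rw [hAeq, hCeq, hf']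
        _ = G₂ := (recover G₂ A₂ C₂ hA₂ hC₂ hAC₂ hbound₂).symm
  refine key.trans ?_
  rw [Finset.card_powersetCard]
  exact Nat.choose_le_choose r hMidcard

def F0 (n : ℕ) : Finset (Finset (Fin n)) :=
  insert ∅ (insert Finset.univ (level n (n / 2)))

lemma F0_mem {n : ℕ} (S : Finset (Fin n)) :
    S ∈ F0 n ↔ S = ∅ ∨ S = Finset.univ ∨ S.card = n / 2 := by
  simp [F0, level]

lemma F0_helper {n : ℕ} (hn : 2 ≤ n) {S T : Finset (Fin n)}
    (hS : S ∈ F0 n) (hT : T ∈ F0 n) (hsub : S ⊆ T) (hne : S ≠ T) :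
    S = ∅ ∨ T = Finset.univ := by
  have h1 : 1 ≤ n / 2 := by omega
  have h2 : n / 2 < n := Nat.div_lt_self (by omega) one_lt_two
  rw [F0_mem] at hS hT
  rcases hS with rfl | rfl | hSc
  · exact Or.inl rfl
  · exact Or.inr (Finset.univ_subset_iff.mp hsub)
  · rcases hT with rfl | rfl | hTc
    · exact absurd (Finset.subset_empty.mp hsub ▸ hSc) (by simp; omega)
    · exact Or.inr rfl
    · exact absurd (Finset.eq_of_subset_of_card_le hsub (le_of_eq (hTc.trans hSc.symm))) hne

lemma F0_bfree {n : ℕ} (hn : 2 ≤ n) : ¬ HasQuad (F0 n) := by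
  rintro ⟨X, hX, Y, hY, Z, hZ, W, hW, hXY, hXZ, hXW, hYZ, hYW, hZW,
    sXZ, sXW, sYZ, sYW⟩
  rcases F0_helper hn hX hZ sXZ hXZ with rfl | rfl
  · rcases F0_helper hn hY hZ sYZ hYZ with rfl | rfl
    · exact hXY rfl
    · rcases F0_helper hn hY hW sYW hYW with h | rfl
      · exact hXY h.symm
      · exact hZW rfl
  · rcases F0_helper hn hX hW sXW hXW with rfl | rfl
    · rcases F0_helper hn hY hW sYW hYW with h | rfl
      · exact hXY h.symm
      · exact hZW rfl
    · exact hZW rfl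

lemma level_card {n k : ℕ} : (level n k).card = n.choose k := by
  have : level n k = Finset.powersetCard k Finset.univ := by
    ext X
    simp [level, Finset.mem_powersetCard]
  rw [this, Finset.card_powersetCard, Finset.card_univ, Fintype.card_fin]

lemma lower_bound {n r : ℕ} (hn : 2 ≤ n) (hr : 1 ≤ r) :
    (n.choose (n / 2)).choose r ≤ copyCount (DiamondPoset r) (F0 n) := by
  classical
  have h1 : 1 ≤ n / 2 := by omega
  have h2 : n / 2 < n := Nat.div_lt_self (by omega) one_lt_two
  have hne0 : ((∅ : Finset (Fin n)) ≠ Finset.univ) := by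
    intro h
    have : (⟨0, by omega⟩ : Fin n) ∈ (∅ : Finset (Fin n)) := h ▸ Finset.mem_univ _
    simp at this
  rw [copyCount]
  have key : ((level n (n / 2)).powersetCard r).card ≤
      ((F0 n).powerset.filter fun G => IsCopy (DiamondPoset r) G).card := by
    apply Finset.card_le_card_of_injOn (fun S => insert ∅ (insert Finset.univ S))
    · intro S hS
      simp only [Finset.mem_coe] at hS ⊢
      rw [Finset.mem_powersetCard] at hS
      obtain ⟨hSsub, hScard⟩ := hS
      have hSmem : ∀ X ∈ S, X.card = n / 2 := by
        intro X hX
        have := hSsub hX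
        simpa [level] using this
      have hunivS : Finset.univ ∉ S := by
        intro h
        have := hSmem _ h
        rw [Finset.card_univ, Fintype.card_fin] at this
        omega
      have hemptyS : (∅ : Finset (Fin n)) ∉ insert Finset.univ S := by
        intro h
        rcases Finset.mem_insert.mp h with h | h
        · exact hne0 h
        · have := hSmem _ h
          simp at this
          omega
      rw [Finset.mem_filter, Finset.mem_powerset]
      constructor
      · intro X hX
        rcases Finset.mem_insert.mp hX with rfl | hX
        · exact Finset.mem_insert_self _ _
        rcases Finset.mem_insert.mp hX with rfl | hX
        · exact Finset.mem_insert_of_mem (Finset.mem_insert_self _ _)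
        · exact Finset.mem_insert_of_mem (Finset.mem_insert_of_mem (hSsub hX))
      · rw [isCopy_diamond_iff]
        refine ⟨?_, ∅, Finset.mem_insert_self _ _, Finset.univ,
          Finset.mem_insert_of_mem (Finset.mem_insert_self _ _), hne0, ?_⟩
        · rw [Finset.card_insert_of_notMem hemptyS, Finset.card_insert_of_notMem hunivS,
            hScard]
        · intro X _
          exact ⟨Finset.empty_subset X, Finset.subset_univ X⟩
    · intro S₁ hS₁ S₂ hS₂ hf
      rw [Finset.mem_coe, Finset.mem_powersetCard] at hS₁ hS₂
      have hf' : insert ∅ (insert Finset.univ S₁) = insert ∅ (insert Finset.univ S₂) := hf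
      have hmem : ∀ (S : Finset (Finset (Fin n))), S ⊆ level n (n / 2) →
          ∀ X ∈ S, X ≠ ∅ ∧ X ≠ Finset.univ := by
        intro S hsub X hX
        have hc : X.card = n / 2 := by simpa [level] using hsub hX
        constructor
        · intro h; rw [h, Finset.card_empty] at hc; omega
        · intro h; rw [h, Finset.card_univ, Fintype.card_fin] at hc; omega
      ext X
      constructor
      · intro hX
        have hX' : X ∈ insert ∅ (insert Finset.univ S₂) := by
          rw [← hf']
          exact Finset.mem_insert_of_mem (Finset.mem_insert_of_mem hX)
        obtain ⟨hne, hnu⟩ := hmem S₁ hS₁.1 X hX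
        rcases Finset.mem_insert.mp hX' with h | h
        · exact absurd h hne
        rcases Finset.mem_insert.mp h with h | h
        · exact absurd h hnu
        · exact h
      · intro hX
        have hX' : X ∈ insert ∅ (insert Finset.univ S₁) := by
          rw [hf']
          exact Finset.mem_insert_of_mem (Finset.mem_insert_of_mem hX)
        obtain ⟨hne, hnu⟩ := hmem S₂ hS₂.1 X hX
        rcases Finset.mem_insert.mp hX' with h | h
        · exact absurd h hne
        rcases Finset.mem_insert.mp h with h | h
        · exact absurd h hnu
        · exact h
  refine le_trans ?_ key
  rw [Finset.card_powersetCard, level_card]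

theorem statement2 (n r : ℕ) (hn : 2 ≤ n) (hr : 1 ≤ r) :
    La n Butterfly (DiamondPoset r) = (n.choose (n / 2)).choose r := by
  apply le_antisymm
  · apply Finset.sup_le
    intro F hF
    rw [Finset.mem_filter] at hF
    apply upper_bound hr
    intro hq
    exact copy_of_quad hq hF.2
  · have hF0 : copyCount Butterfly (F0 n) = 0 := by
      by_contra h
      exact F0_bfree hn (hasQuad_of_copy h)
    refine le_trans (lower_bound hn hr) ?_
    exact Finset.le_sup (Finset.mem_filter.mpr ⟨Finset.mem_univ _, hF0⟩)

end
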